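/- Uniform weighted Taylor remainder (from the proof of Lemma 5.1). Let r : ℝ → ℂ be a Schwartz-class function, let N ≥ 2 be an integer, and let K > 0. Define ρ(k) = (k−i)^{4N+7} r(k) for k ∈ ℝ, and for k₀ ∈ [0,K] define f(k₀, k) := r(k) − (k−i)^{−(4N+7)} Σ_{j=0}^{4N+3} ρ^{(j)}(k₀) (k−k₀)^j / j! for k ∈ ℝ. Then there is a constant C > 0 such that for every k₀ ∈ [0,K], every real k, and every n = 0, 1, …, N+1: |∂_k^n f(k₀,k)| ≤ C |k−k₀|^{4N+4−n} whenever |k−k₀| ≤ 1, and |∂_k^n f(k₀,k)| ≤ C (1+|k|)^{−4} for all real k. -/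

import Mathlib

open Set

/-- `ρ(k) = (k - i)^(4N+7) r(k)` for real `k`. -/
noncomputable def rho (r : ℝ → ℂ) (N : ℕ) (k : ℝ) : ℂ :=
  ((k : ℂ) - Complex.I) ^ (4 * N + 7) * r k

/-- The weighted Taylor remainder
`f(k₀,k) = r(k) - (k-i)^{-(4N+7)} ∑_{j=0}^{4N+3} ρ⁽ʲ⁾(k₀) (k-k₀)^j / j!`. -/
noncomputable def fTay (r : ℝ → ℂ) (N : ℕ) (k0 k : ℝ) : ℂ :=
  r k - (∑ j ∈ Finset.range (4 * N + 4),
      iteratedDeriv j (rho r N) k0 * ((k : ℂ) - (k0 : ℂ)) ^ j / (Nat.factorial j)) /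
    ((k : ℂ) - Complex.I) ^ (4 * N + 7)

open ContDiff

section Aux

lemma aux_ne (k : ℝ) : ((k : ℂ) - Complex.I) ≠ 0 := by
  intro h; have := congrArg Complex.im h; simp at this

lemma aux_one_le (k : ℝ) : 1 ≤ ‖(k : ℂ) - Complex.I‖ := by
  have h : |((k : ℂ) - Complex.I).im| ≤ ‖(k : ℂ) - Complex.I‖ :=
    Complex.abs_im_le_norm _
  simpa using h

lemma aux_half_le (k : ℝ) : (1 + |k|) / 2 ≤ ‖(k : ℂ) - Complex.I‖ := by
  have h1 := aux_one_le k
  have h2 : |((k : ℂ) - Complex.I).re| ≤ ‖(k : ℂ) - Complex.I‖ :=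
    Complex.abs_re_le_norm _
  simp only [Complex.sub_re, Complex.ofReal_re, Complex.I_re, sub_zero] at h2
  have h3 : ‖(k : ℂ) - Complex.I‖ = ‖(k : ℂ) - Complex.I‖ := rfl
  rw [h3] at h2
  linarith

lemma contDiff_ofReal : ContDiff ℝ ∞ (fun k : ℝ => (k : ℂ)) :=
  Complex.ofRealCLM.contDiff

lemma hasDerivAt_pow_ofReal (c : ℂ) (p : ℕ) (k : ℝ) :
    HasDerivAt (fun k : ℝ => ((k : ℂ) - c) ^ p) (p * ((k : ℂ) - c) ^ (p - 1)) k := by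
  have h1 : HasDerivAt (fun z : ℂ => (z - c) ^ p) (p * ((k : ℂ) - c) ^ (p - 1)) ((k : ℂ)) := by
    have := (hasDerivAt_pow p ((k : ℂ) - c)).comp ((k : ℂ))
      ((hasDerivAt_id ((k : ℂ))).sub_const c)
    simpa [Function.comp_def] using this
  exact h1.comp_ofReal

lemma hasDerivAt_zpow_ofReal (z : ℤ) (k : ℝ) :
    HasDerivAt (fun k : ℝ => ((k : ℂ) - Complex.I) ^ z)
      (z * ((k : ℂ) - Complex.I) ^ (z - 1)) k := by
  have h1 : HasDerivAt (fun w : ℂ => (w - Complex.I) ^ z)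
      (z * ((k : ℂ) - Complex.I) ^ (z - 1)) ((k : ℂ)) := by
    have := (hasDerivAt_zpow z ((k : ℂ) - Complex.I) (Or.inl (aux_ne k))).comp ((k : ℂ))
      ((hasDerivAt_id ((k : ℂ))).sub_const Complex.I)
    simpa [Function.comp_def] using this
  exact h1.comp_ofReal

lemma iteratedDeriv_monomial (c : ℂ) (j m : ℕ) :
    iteratedDeriv m (fun k : ℝ => ((k : ℂ) - c) ^ j)
      = fun k : ℝ => (j.descFactorial m : ℂ) * ((k : ℂ) - c) ^ (j - m) := by
  induction m with
  | zero => funext k; simp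
  | succ m ih =>
    funext k
    rw [iteratedDeriv_succ, ih]
    have hd : HasDerivAt (fun k : ℝ => (j.descFactorial m : ℂ) * ((k : ℂ) - c) ^ (j - m))
        ((j.descFactorial m : ℂ) * ((j - m : ℕ) * ((k : ℂ) - c) ^ (j - m - 1))) k :=
      (hasDerivAt_pow_ofReal c (j - m) k).const_mul _
    rw [hd.deriv]
    rcases le_or_gt (m + 1) j with h | h
    · have h1 : j - m - 1 = j - (m + 1) := by omega
      rw [h1, Nat.descFactorial_succ]
      have h2 : ((j - m : ℕ) : ℂ) = (j : ℂ) - m := by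
        push_cast [Nat.cast_sub (by omega : m ≤ j)]; ring
      push_cast
      ring
    · have h1 : j - m = 0 := by omega
      have h2 : j.descFactorial (m + 1) = 0 := Nat.descFactorial_eq_zero_iff_lt.mpr (by omega)
      rw [h1, h2]
      simp

lemma iteratedDeriv_wpow (z : ℤ) (m : ℕ) :
    iteratedDeriv m (fun k : ℝ => ((k : ℂ) - Complex.I) ^ z)
      = fun k : ℝ => (∏ i ∈ Finset.range m, ((z : ℂ) - i)) * ((k : ℂ) - Complex.I) ^ (z - m) := by
  induction m with
  | zero => funext k; simp
  | succ m ih =>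
    funext k
    rw [iteratedDeriv_succ, ih]
    have hd : HasDerivAt
        (fun k : ℝ => (∏ i ∈ Finset.range m, ((z : ℂ) - i)) * ((k : ℂ) - Complex.I) ^ (z - m))
        ((∏ i ∈ Finset.range m, ((z : ℂ) - i)) *
          (((z - m : ℤ) : ℂ) * ((k : ℂ) - Complex.I) ^ (z - m - 1))) k :=
      (hasDerivAt_zpow_ofReal (z - m) k).const_mul _
    rw [hd.deriv, Finset.prod_range_succ]
    have h1 : z - (m : ℤ) - 1 = z - ((m : ℕ) + 1 : ℕ) := by push_cast; ring
    rw [h1]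
    push_cast
    ring

lemma iteratedDeriv_zero_fun {n : ℕ} :
    iteratedDeriv n (fun _ : ℝ => (0 : ℂ)) = fun _ => 0 := by
  induction n with
  | zero => simp
  | succ n ih =>
    rw [iteratedDeriv_succ, ih]
    funext x
    simp

lemma my_iteratedDeriv_sub {f g : ℝ → ℂ} (hf : ContDiff ℝ ∞ f) (hg : ContDiff ℝ ∞ g)
    (n : ℕ) (x : ℝ) :
    iteratedDeriv n (fun k => f k - g k) x = iteratedDeriv n f x - iteratedDeriv n g x := by
  have h0 : (fun k => f k - g k) = f - g := rfl
  rw [h0, ← iteratedDerivWithin_univ, ← iteratedDerivWithin_univ, ← iteratedDerivWithin_univ]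
  exact iteratedDerivWithin_sub (Set.mem_univ x) uniqueDiffOn_univ
    (hf.contDiffWithinAt.of_le (by exact_mod_cast le_top (α := ℕ∞) (a := (n : ℕ∞))))
    (hg.contDiffWithinAt.of_le (by exact_mod_cast le_top (α := ℕ∞) (a := (n : ℕ∞))))

lemma my_iteratedDeriv_const_mul (c : ℂ) {f : ℝ → ℂ} (hf : ContDiff ℝ ∞ f) (n : ℕ) (x : ℝ) :
    iteratedDeriv n (fun k => c * f k) x = c * iteratedDeriv n f x := by
  have h0 : (fun k => c * f k) = c • f := by funext k; simp
  rw [h0, ← iteratedDerivWithin_univ, ← iteratedDerivWithin_univ]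
  rw [iteratedDerivWithin_const_smul (Set.mem_univ x) uniqueDiffOn_univ c
    (hf.contDiffWithinAt.of_le (by exact_mod_cast le_top (α := ℕ∞) (a := (n : ℕ∞))))]
  simp

lemma my_iteratedDeriv_sum {ι : Type*} (s : Finset ι) (F : ι → ℝ → ℂ)
    (hF : ∀ j ∈ s, ContDiff ℝ ∞ (F j)) (n : ℕ) (x : ℝ) :
    iteratedDeriv n (fun k => ∑ j ∈ s, F j k) x = ∑ j ∈ s, iteratedDeriv n (F j) x := by
  classical
  induction s using Finset.induction with
  | empty =>
    simp only [Finset.sum_empty, iteratedDeriv_zero_fun]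
  | @insert a s' hj ih =>
    have h1 : (fun k => ∑ j ∈ insert a s', F j k)
        = fun k => F a k + ∑ j ∈ s', F j k := by
      funext k; rw [Finset.sum_insert hj]
    rw [h1, Finset.sum_insert hj]
    have hFa : ContDiff ℝ ∞ (F a) := hF a (Finset.mem_insert_self a s')
    have hFs : ContDiff ℝ ∞ (fun k => ∑ j ∈ s', F j k) :=
      ContDiff.sum fun j hj' => hF j (Finset.mem_insert_of_mem hj')
    have h2 : iteratedDeriv n (fun k => F a k + ∑ j ∈ s', F j k) x
        = iteratedDeriv n (F a) x + iteratedDeriv n (fun k => ∑ j ∈ s', F j k) x := by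
      have h3 : (fun k => F a k + ∑ j ∈ s', F j k) = F a + fun k => ∑ j ∈ s', F j k := rfl
      rw [h3, ← iteratedDerivWithin_univ, ← iteratedDerivWithin_univ, ← iteratedDerivWithin_univ]
      exact iteratedDerivWithin_add (Set.mem_univ x) uniqueDiffOn_univ
        (hFa.contDiffWithinAt.of_le (by exact_mod_cast le_top (α := ℕ∞) (a := (n : ℕ∞))))
        (hFs.contDiffWithinAt.of_le (by exact_mod_cast le_top (α := ℕ∞) (a := (n : ℕ∞))))
    rw [h2, ih fun j hj' => hF j (Finset.mem_insert_of_mem hj')]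

lemma my_iteratedDeriv_iteratedDeriv {f : ℝ → ℂ} (m l : ℕ) :
    iteratedDeriv l (iteratedDeriv m f) = iteratedDeriv (m + l) f := by
  simp only [iteratedDeriv_eq_iterate]
  rw [← Function.iterate_add_apply]
  congr 1
  omega

lemma contDiff_iteratedDeriv {f : ℝ → ℂ} (hf : ContDiff ℝ ∞ f) (m : ℕ) :
    ContDiff ℝ ∞ (iteratedDeriv m f) := by
  rw [iteratedDeriv_eq_iterate]
  exact hf.iterate_deriv m

/-- Taylor remainder of order `p` at `k0`. -/
noncomputable def TR (h : ℝ → ℂ) (p : ℕ) (k0 k : ℝ) : ℂ :=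
  h k - ∑ l ∈ Finset.range p, iteratedDeriv l h k0 * ((k : ℂ) - (k0 : ℂ)) ^ l / l.factorial

lemma TR_hasDerivAt (h : ℝ → ℂ) (hsm : ContDiff ℝ ∞ h) (p : ℕ) (k0 t : ℝ) :
    HasDerivAt (fun k => TR h (p + 1) k0 k) (TR (deriv h) p k0 t) t := by
  have hh : HasDerivAt h (deriv h t) t :=
    ((hsm.differentiable (by simp)) t).hasDerivAt
  have hsum : HasDerivAt
      (fun k : ℝ => ∑ l ∈ Finset.range (p + 1),
        iteratedDeriv l h k0 * ((k : ℂ) - (k0 : ℂ)) ^ l / l.factorial)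
      (∑ l ∈ Finset.range (p + 1),
        iteratedDeriv l h k0 * ((l : ℂ) * ((t : ℂ) - (k0 : ℂ)) ^ (l - 1)) / l.factorial) t := by
    apply HasDerivAt.fun_sum
    intro l _
    exact ((hasDerivAt_pow_ofReal (k0 : ℂ) l t).const_mul (iteratedDeriv l h k0)).div_const _
  have key : ∑ l ∈ Finset.range (p + 1),
        iteratedDeriv l h k0 * ((l : ℂ) * ((t : ℂ) - (k0 : ℂ)) ^ (l - 1)) / l.factorial
      = ∑ l ∈ Finset.range p,
        iteratedDeriv l (deriv h) k0 * ((t : ℂ) - (k0 : ℂ)) ^ l / l.factorial := by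
    rw [Finset.sum_range_succ']
    simp only [Nat.cast_zero, zero_mul, mul_zero, zero_div, add_zero]
    apply Finset.sum_congr rfl
    intro l _
    have h1 : iteratedDeriv (l + 1) h k0 = iteratedDeriv l (deriv h) k0 := by
      rw [iteratedDeriv_succ']
    rw [← h1]
    have h2 : ((l + 1 : ℕ) : ℂ) ≠ 0 := by exact_mod_cast Nat.succ_ne_zero l
    have h3 : ((l.factorial : ℕ) : ℂ) ≠ 0 := by exact_mod_cast l.factorial_ne_zero
    rw [Nat.factorial_succ]
    push_cast
    rw [div_eq_div_iff (mul_ne_zero (by exact_mod_cast h2) h3) h3]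
    ring
  have hfin := hh.sub hsum
  rw [key] at hfin
  exact hfin

lemma TR_cont (h : ℝ → ℂ) (hsm : ContDiff ℝ ∞ h) (p : ℕ) (k0 : ℝ) :
    Continuous (TR h p k0) := by
  unfold TR
  apply Continuous.sub hsm.continuous
  apply continuous_finset_sum
  intro l _
  apply Continuous.div_const
  apply Continuous.mul continuous_const
  exact ((contDiff_ofReal.continuous).sub continuous_const).pow l

lemma abs_sub_le_of_uIoc {k0 k t : ℝ} (ht : t ∈ Set.uIoc k0 k) : |t - k0| ≤ |k - k0| := by
  rcases le_total k0 k with h | h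
  · rw [Set.uIoc_of_le h] at ht
    obtain ⟨h1, h2⟩ := ht
    rw [abs_of_pos (by linarith), abs_of_nonneg (by linarith)]
    linarith
  · rw [Set.uIoc_of_ge h] at ht
    obtain ⟨h1, h2⟩ := ht
    rw [abs_of_nonpos (by linarith), abs_of_nonpos (by linarith)]
    linarith

lemma TR_bound (p : ℕ) : ∀ (h : ℝ → ℂ), ContDiff ℝ ∞ h → ∀ (B : ℝ) (k0 : ℝ),
    (∀ t : ℝ, |t - k0| ≤ 1 → ‖iteratedDeriv p h t‖ ≤ B) →
    ∀ k : ℝ, |k - k0| ≤ 1 → ‖TR h p k0 k‖ ≤ B * |k - k0| ^ p := by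
  induction p with
  | zero =>
    intro h hsm B k0 hB k hk
    simpa [TR] using hB k hk
  | succ p ih =>
    intro h hsm B k0 hB k hk
    have hB0 : 0 ≤ B := le_trans (norm_nonneg _) (hB k0 (by simp))
    have hsm' : ContDiff ℝ ∞ (deriv h) := (contDiff_infty_iff_deriv.mp hsm).2
    have hder : ∀ t : ℝ, HasDerivAt (TR h (p + 1) k0) (TR (deriv h) p k0 t) t :=
      fun t => TR_hasDerivAt h hsm p k0 t
    have hint : IntervalIntegrable (TR (deriv h) p k0) MeasureTheory.volume k0 k :=
      (TR_cont (deriv h) hsm' p k0).intervalIntegrable _ _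
    have heq : ∫ t in k0..k, TR (deriv h) p k0 t = TR h (p + 1) k0 k - TR h (p + 1) k0 k0 :=
      intervalIntegral.integral_eq_sub_of_hasDerivAt (fun t _ => hder t) hint
    have hzero : TR h (p + 1) k0 k0 = 0 := by
      unfold TR
      rw [Finset.sum_range_succ']
      simp
    have hb : ∀ t ∈ Set.uIoc k0 k, ‖TR (deriv h) p k0 t‖ ≤ B * |k - k0| ^ p := by
      intro t ht
      have h1 : |t - k0| ≤ |k - k0| := abs_sub_le_of_uIoc ht
      have h2 : |t - k0| ≤ 1 := h1.trans hk
      have h3 : ‖TR (deriv h) p k0 t‖ ≤ B * |t - k0| ^ p := by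
        apply ih (deriv h) hsm' B k0 _ t h2
        intro s hs
        have := hB s hs
        rwa [iteratedDeriv_succ'] at this
      calc ‖TR (deriv h) p k0 t‖ ≤ B * |t - k0| ^ p := h3
        _ ≤ B * |k - k0| ^ p := by
            apply mul_le_mul_of_nonneg_left _ hB0
            exact pow_le_pow_left₀ (abs_nonneg _) h1 p
    have hnorm : ‖TR h (p + 1) k0 k‖ ≤ B * |k - k0| ^ p * |k - k0| := by
      have := intervalIntegral.norm_integral_le_of_norm_le_const hb
      rw [heq, hzero, sub_zero] at this
      simpa [abs_sub_comm k k0] using this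
    calc ‖TR h (p + 1) k0 k‖ ≤ B * |k - k0| ^ p * |k - k0| := hnorm
      _ = B * |k - k0| ^ (p + 1) := by ring

lemma descFactorial_le_factorial (n k : ℕ) : n.descFactorial k ≤ n.factorial := by
  rcases le_or_gt k n with h | h
  · have h1 := Nat.factorial_mul_descFactorial h
    calc n.descFactorial k ≤ (n - k).factorial * n.descFactorial k :=
          Nat.le_mul_of_pos_left _ (Nat.factorial_pos _)
      _ = n.factorial := h1
  · rw [Nat.descFactorial_eq_zero_iff_lt.mpr h]
    exact Nat.zero_le _

lemma contDiff_monomial (c : ℂ) (j : ℕ) :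
    ContDiff ℝ ∞ (fun x : ℝ => ((x : ℂ) - c) ^ j) :=
  (contDiff_ofReal.sub contDiff_const).pow j

lemma iD_S (ρ : ℝ → ℂ) (D1 m : ℕ) (k0 k : ℝ) :
    iteratedDeriv m (fun x : ℝ => ∑ j ∈ Finset.range D1,
        iteratedDeriv j ρ k0 * ((x : ℂ) - (k0 : ℂ)) ^ j / (Nat.factorial j)) k
      = ∑ j ∈ Finset.range D1, (iteratedDeriv j ρ k0 / (Nat.factorial j)) *
          ((j.descFactorial m : ℂ) * ((k : ℂ) - (k0 : ℂ)) ^ (j - m)) := by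
  rw [my_iteratedDeriv_sum (Finset.range D1)
      (fun j => fun x : ℝ => iteratedDeriv j ρ k0 * ((x : ℂ) - (k0 : ℂ)) ^ j / (Nat.factorial j))
      (fun j _ => by
        show ContDiff ℝ ∞ (fun x : ℝ =>
          iteratedDeriv j ρ k0 * ((x : ℂ) - (k0 : ℂ)) ^ j / (Nat.factorial j))
        have h1 : (fun x : ℝ => iteratedDeriv j ρ k0 * ((x : ℂ) - (k0 : ℂ)) ^ j / (Nat.factorial j))
            = fun x : ℝ => (iteratedDeriv j ρ k0 / (Nat.factorial j)) * ((x : ℂ) - (k0 : ℂ)) ^ j := by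
          funext x; ring
        rw [h1]
        exact contDiff_const.mul (contDiff_monomial (k0 : ℂ) j)) m k]
  apply Finset.sum_congr rfl
  intro j _
  show iteratedDeriv m (fun x : ℝ =>
      iteratedDeriv j ρ k0 * ((x : ℂ) - (k0 : ℂ)) ^ j / (Nat.factorial j)) k = _
  have h1 : (fun x : ℝ => iteratedDeriv j ρ k0 * ((x : ℂ) - (k0 : ℂ)) ^ j / (Nat.factorial j))
      = fun x : ℝ => (iteratedDeriv j ρ k0 / (Nat.factorial j)) * ((x : ℂ) - (k0 : ℂ)) ^ j := by
    funext x; ring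
  rw [h1, my_iteratedDeriv_const_mul _ (contDiff_monomial (k0 : ℂ) j) m k,
    iteratedDeriv_monomial (k0 : ℂ) j m]

lemma contDiff_Spoly (ρ : ℝ → ℂ) (D1 : ℕ) (k0 : ℝ) :
    ContDiff ℝ ∞ (fun x : ℝ => ∑ j ∈ Finset.range D1,
      iteratedDeriv j ρ k0 * ((x : ℂ) - (k0 : ℂ)) ^ j / (Nat.factorial j)) := by
  apply ContDiff.sum
  intro j _
  have h1 : (fun x : ℝ => iteratedDeriv j ρ k0 * ((x : ℂ) - (k0 : ℂ)) ^ j / (Nat.factorial j))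
      = fun x : ℝ => (iteratedDeriv j ρ k0 / (Nat.factorial j)) * ((x : ℂ) - (k0 : ℂ)) ^ j := by
    funext x; ring
  rw [h1]
  exact contDiff_const.mul (contDiff_monomial (k0 : ℂ) j)

lemma key_g (ρ : ℝ → ℂ) (hsm : ContDiff ℝ ∞ ρ) (D1 m : ℕ) (hm : m ≤ D1) (k0 k : ℝ) :
    iteratedDeriv m (fun x : ℝ => ρ x - ∑ j ∈ Finset.range D1,
        iteratedDeriv j ρ k0 * ((x : ℂ) - (k0 : ℂ)) ^ j / (Nat.factorial j)) k
      = TR (iteratedDeriv m ρ) (D1 - m) k0 k := by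
  rw [my_iteratedDeriv_sub hsm (contDiff_Spoly ρ D1 k0) m k, iD_S]
  unfold TR
  simp only [my_iteratedDeriv_iteratedDeriv]
  congr 1
  conv_lhs => rw [show D1 = m + (D1 - m) from by omega, Finset.sum_range_add]
  rw [Finset.sum_eq_zero (fun j hj => by
    rw [Nat.descFactorial_eq_zero_iff_lt.mpr (Finset.mem_range.mp hj)]
    simp), zero_add]
  apply Finset.sum_congr rfl
  intro l _
  have hfac : ((l.factorial : ℕ) : ℂ) * (((m + l).descFactorial m : ℕ) : ℂ)
      = (((m + l).factorial : ℕ) : ℂ) := by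
    exact_mod_cast congrArg (Nat.cast (R := ℂ))
      (by simpa using Nat.factorial_mul_descFactorial (Nat.le_add_right m l))
  have hF : (((m + l).factorial : ℕ) : ℂ) ≠ 0 := by exact_mod_cast (m + l).factorial_ne_zero
  have hf : ((l.factorial : ℕ) : ℂ) ≠ 0 := by exact_mod_cast l.factorial_ne_zero
  rw [show m + l - m = l by omega]
  rw [div_mul_eq_mul_div, div_eq_div_iff hF hf]
  linear_combination iteratedDeriv (m + l) ρ k0 * ((k : ℂ) - (k0 : ℂ)) ^ l * hfac

lemma norm_iteratedDeriv_w_le (M m : ℕ) (k : ℝ) :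
    ‖iteratedDeriv m (fun k : ℝ => ((k : ℂ) - Complex.I) ^ (-(M : ℤ))) k‖
      ≤ (∏ i ∈ Finset.range m, ((M : ℝ) + i)) * (2 ^ M / (1 + |k|) ^ M) := by
  rw [iteratedDeriv_wpow]
  rw [norm_mul]
  apply mul_le_mul ?_ ?_ (norm_nonneg _) (by positivity)
  case _ =>
    rw [norm_prod]
    apply Finset.prod_le_prod (fun i _ => norm_nonneg _)
    intro i _
    apply (norm_sub_le _ _).trans
    simp only [Complex.norm_intCast, Complex.norm_natCast]
    push_cast
    simp
  rw [norm_zpow]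
  have hx1 := aux_one_le k
  have hx2 := aux_half_le k
  have hxpos : (0 : ℝ) < ‖(k : ℂ) - Complex.I‖ := lt_of_lt_of_le one_pos hx1
  rw [show (-(M : ℤ) - m) = -((M + m : ℕ) : ℤ) by push_cast; ring, zpow_neg, zpow_natCast]
  have step1 : (‖(k : ℂ) - Complex.I‖ ^ (M + m))⁻¹ ≤ (‖(k : ℂ) - Complex.I‖ ^ M)⁻¹ := by
    apply inv_anti₀ (pow_pos hxpos M)
    exact pow_le_pow_right₀ hx1 (Nat.le_add_right M m)
  apply step1.trans
  have step2 : ((1 + |k|) / 2) ^ M ≤ ‖(k : ℂ) - Complex.I‖ ^ M :=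
    pow_le_pow_left₀ (by positivity) hx2 M
  have step3 : (‖(k : ℂ) - Complex.I‖ ^ M)⁻¹ ≤ (((1 + |k|) / 2) ^ M)⁻¹ :=
    inv_anti₀ (by positivity) step2
  apply step3.trans
  rw [div_pow, inv_div]

lemma leibniz_norm {f g : ℝ → ℂ} (hf : ContDiff ℝ ∞ f) (hg : ContDiff ℝ ∞ g) (n : ℕ) (x : ℝ) :
    ‖iteratedDeriv n (fun k => f k * g k) x‖ ≤ ∑ j ∈ Finset.range (n + 1),
      (n.choose j : ℝ) * ‖iteratedDeriv j f x‖ * ‖iteratedDeriv (n - j) g x‖ := by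
  have hn : (n : WithTop ℕ∞) ≤ ∞ := by
    exact_mod_cast le_top (α := ℕ∞) (a := (n : ℕ∞))
  have h := norm_iteratedFDeriv_mul_le (𝕜 := ℝ) hf hg x hn
  simpa only [norm_iteratedFDeriv_eq_norm_iteratedDeriv] using h

lemma fTay_eq_mul (r : ℝ → ℂ) (N : ℕ) (k0 : ℝ) :
    fTay r N k0 = fun k =>
      (rho r N k - ∑ j ∈ Finset.range (4 * N + 4),
          iteratedDeriv j (rho r N) k0 * ((k : ℂ) - (k0 : ℂ)) ^ j / (Nat.factorial j))
        * ((k : ℂ) - Complex.I) ^ (-((4 * N + 7 : ℕ) : ℤ)) := by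
  funext k
  have hne : ((k : ℂ) - Complex.I) ^ (4 * N + 7) ≠ 0 := pow_ne_zero _ (aux_ne k)
  simp only [fTay, rho, zpow_neg, zpow_natCast]
  field_simp

lemma fTay_eq_sub (r : ℝ → ℂ) (N : ℕ) (k0 : ℝ) :
    fTay r N k0 = fun k => r k - (∑ j ∈ Finset.range (4 * N + 4),
        iteratedDeriv j (rho r N) k0 * ((k : ℂ) - (k0 : ℂ)) ^ j / (Nat.factorial j))
        * ((k : ℂ) - Complex.I) ^ (-((4 * N + 7 : ℕ) : ℤ)) := by
  funext k
  simp only [fTay, zpow_neg, zpow_natCast, div_eq_mul_inv]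

end Aux

/-- Uniform weighted Taylor remainder (from the proof of Lemma 5.1). -/
theorem uniform_weighted_taylor_remainder
    (r : SchwartzMap ℝ ℂ) (N : ℕ) (hN : 2 ≤ N) (K : ℝ) (hK : 0 < K) :
    ∃ C : ℝ, 0 < C ∧
      ∀ k0 ∈ Icc (0 : ℝ) K, ∀ n : ℕ, n ≤ N + 1 → ∀ k : ℝ,
        (|k - k0| ≤ 1 →
          ‖iteratedDeriv n (fTay (fun x : ℝ => r x) N k0) k‖ ≤
            C * |k - k0| ^ (4 * N + 4 - n)) ∧
        ‖iteratedDeriv n (fTay (fun x : ℝ => r x) N k0) k‖ ≤ C / (1 + |k|) ^ 4 := by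
  classical
  have hsub : ContDiff ℝ ∞ (fun k : ℝ => (k : ℂ) - Complex.I) :=
    contDiff_ofReal.sub contDiff_const
  have hρ : ContDiff ℝ ∞ (rho (fun x : ℝ => r x) N) :=
    (hsub.pow (4 * N + 7)).mul r.smooth'
  have hw : ContDiff ℝ ∞ (fun k : ℝ => ((k : ℂ) - Complex.I) ^ (-((4 * N + 7 : ℕ) : ℤ))) := by
    have h0 : (fun k : ℝ => ((k : ℂ) - Complex.I) ^ (-((4 * N + 7 : ℕ) : ℤ)))
        = fun k : ℝ => (((k : ℂ) - Complex.I) ^ (4 * N + 7 : ℕ))⁻¹ := by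
      funext k; rw [zpow_neg, zpow_natCast]
    rw [h0]
    exact (hsub.pow _).inv fun k => pow_ne_zero _ (aux_ne k)
  -- bound on derivatives of rho over a compact set
  obtain ⟨B, hBraw⟩ := (isCompact_Icc (a := (-1 : ℝ)) (b := K + 1)).exists_bound_of_continuousOn
    (f := fun t => ∑ l ∈ Finset.range (4 * N + 5), ‖iteratedDeriv l (rho (fun x : ℝ => r x) N) t‖)
    (Continuous.continuousOn (by
      apply continuous_finset_sum
      intro l _
      exact (hρ.continuous_iteratedDeriv l (by
        exact_mod_cast le_top (α := ℕ∞) (a := (l : ℕ∞)))).norm))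
  have hBl : ∀ l, l ≤ 4 * N + 4 → ∀ t, t ∈ Icc (-1 : ℝ) (K + 1) →
      ‖iteratedDeriv l (rho (fun x : ℝ => r x) N) t‖ ≤ B := by
    intro l hl t ht
    have h1 : ‖iteratedDeriv l (rho (fun x : ℝ => r x) N) t‖
        ≤ ∑ l' ∈ Finset.range (4 * N + 5), ‖iteratedDeriv l' (rho (fun x : ℝ => r x) N) t‖ :=
      Finset.single_le_sum (f := fun l' => ‖iteratedDeriv l' (rho (fun x : ℝ => r x) N) t‖)
        (fun _ _ => norm_nonneg _) (Finset.mem_range.mpr (by omega))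
    refine h1.trans ((le_abs_self _).trans ?_)
    simpa using hBraw t ht
  have hB0 : 0 ≤ B :=
    le_trans (norm_nonneg _) (hBl 0 (by omega) 0 ⟨by linarith, by linarith⟩)
  -- near-field bound for the Taylor remainder of rho
  have hgbound : ∀ k0 ∈ Icc (0 : ℝ) K, ∀ m, m ≤ N + 1 → ∀ k : ℝ, |k - k0| ≤ 1 →
      ‖iteratedDeriv m (fun x : ℝ => rho (fun x' : ℝ => r x') N x
          - ∑ j ∈ Finset.range (4 * N + 4),
            iteratedDeriv j (rho (fun x' : ℝ => r x') N) k0 * ((x : ℂ) - (k0 : ℂ)) ^ j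
              / (Nat.factorial j)) k‖
        ≤ B * |k - k0| ^ (4 * N + 4 - m) := by
    intro k0 hk0 m hm k hk
    rw [key_g (rho (fun x : ℝ => r x) N) hρ (4 * N + 4) m (by omega) k0 k]
    apply TR_bound (4 * N + 4 - m) (iteratedDeriv m (rho (fun x : ℝ => r x) N))
      (contDiff_iteratedDeriv hρ m) B k0 _ k hk
    intro t ht
    rw [my_iteratedDeriv_iteratedDeriv m (4 * N + 4 - m),
      show m + (4 * N + 4 - m) = 4 * N + 4 by omega]
    apply hBl (4 * N + 4) le_rfl t
    obtain ⟨h1, h2⟩ := abs_le.mp ht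
    obtain ⟨h3, h4⟩ := hk0
    exact ⟨by linarith, by linarith⟩
  -- bound on derivatives of w
  have hcw1 : (1 : ℝ) ≤ ((4 * N + 7 : ℕ) : ℝ) + (N + 1) := by push_cast; linarith
  have hwb : ∀ m, m ≤ N + 1 → ∀ k : ℝ,
      ‖iteratedDeriv m (fun k : ℝ => ((k : ℂ) - Complex.I) ^ (-((4 * N + 7 : ℕ) : ℤ))) k‖
        ≤ (((4 * N + 7 : ℕ) : ℝ) + (N + 1)) ^ (N + 1)
            * (2 ^ (4 * N + 7) / (1 + |k|) ^ (4 * N + 7)) := by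
    intro m hm k
    refine (norm_iteratedDeriv_w_le (4 * N + 7) m k).trans ?_
    apply mul_le_mul_of_nonneg_right _ (by positivity)
    calc ∏ i ∈ Finset.range m, (((4 * N + 7 : ℕ) : ℝ) + i)
        ≤ ∏ _i ∈ Finset.range m, (((4 * N + 7 : ℕ) : ℝ) + (N + 1)) := by
          apply Finset.prod_le_prod (fun i _ => by positivity)
          intro i hi
          have := Finset.mem_range.mp hi
          have : (i : ℝ) ≤ (N + 1 : ℝ) := by
            have : i ≤ N + 1 := by omega
            exact_mod_cast this
          linarith
      _ = (((4 * N + 7 : ℕ) : ℝ) + (N + 1)) ^ m := by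
          rw [Finset.prod_const, Finset.card_range]
      _ ≤ (((4 * N + 7 : ℕ) : ℝ) + (N + 1)) ^ (N + 1) :=
          pow_le_pow_right₀ hcw1 hm
  set cw : ℝ := (((4 * N + 7 : ℕ) : ℝ) + (N + 1)) ^ (N + 1) with hcwdef
  have hcw0 : 0 ≤ cw := by positivity
  -- far-field bound for derivatives of the Taylor polynomial
  have hSb : ∀ k0 ∈ Icc (0 : ℝ) K, ∀ m, m ≤ N + 1 → ∀ k : ℝ,
      ‖iteratedDeriv m (fun x : ℝ => ∑ j ∈ Finset.range (4 * N + 4),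
          iteratedDeriv j (rho (fun x' : ℝ => r x') N) k0 * ((x : ℂ) - (k0 : ℂ)) ^ j
            / (Nat.factorial j)) k‖
        ≤ ((4 * N + 4 : ℝ)) * (B * ((1 + K) ^ (4 * N + 3) * (1 + |k|) ^ (4 * N + 3))) := by
    intro k0 hk0 m hm k
    rw [iD_S (rho (fun x : ℝ => r x) N) (4 * N + 4) m k0 k]
    refine (norm_sum_le _ _).trans ?_
    have hterm : ∀ j ∈ Finset.range (4 * N + 4),
        ‖(iteratedDeriv j (rho (fun x : ℝ => r x) N) k0 / (Nat.factorial j : ℂ)) *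
            ((j.descFactorial m : ℂ) * ((k : ℂ) - (k0 : ℂ)) ^ (j - m))‖
          ≤ B * ((1 + K) ^ (4 * N + 3) * (1 + |k|) ^ (4 * N + 3)) := by
      intro j hj
      have hjlt := Finset.mem_range.mp hj
      rw [norm_mul, norm_mul, norm_div, norm_pow]
      have hXnorm : ‖(k : ℂ) - (k0 : ℂ)‖ = |k - k0| := by
        have h0 : (k : ℂ) - (k0 : ℂ) = ((k - k0 : ℝ) : ℂ) := by push_cast; ring
        rw [h0, Complex.norm_real, Real.norm_eq_abs]
      rw [hXnorm, Complex.norm_natCast, Complex.norm_natCast]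
      have hb1 : ‖iteratedDeriv j (rho (fun x : ℝ => r x) N) k0‖ ≤ B := by
        apply hBl j (by omega) k0
        obtain ⟨h3, h4⟩ := hk0
        exact ⟨by linarith, by linarith⟩
      have hb2 : ‖iteratedDeriv j (rho (fun x : ℝ => r x) N) k0‖ / (Nat.factorial j : ℝ)
            * (j.descFactorial m : ℝ) ≤ B := by
        rw [div_mul_eq_mul_div, div_le_iff₀ (by positivity)]
        apply mul_le_mul hb1 _ (by positivity) hB0
        exact_mod_cast descFactorial_le_factorial j m
      have hb3 : |k - k0| ^ (j - m) ≤ (1 + K) ^ (4 * N + 3) * (1 + |k|) ^ (4 * N + 3) := by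
        have hK0 : 0 ≤ |k0| := abs_nonneg _
        have hk0K : |k0| ≤ K := by
          obtain ⟨h3, h4⟩ := hk0
          rw [abs_of_nonneg h3]; exact h4
        have h1 : |k - k0| ≤ (1 + K) * (1 + |k|) := by
          have h2 : |k - k0| ≤ |k| + |k0| := abs_sub k k0
          have h5 : (0 : ℝ) ≤ |k| := abs_nonneg _
          nlinarith
        have hbase1 : (1 : ℝ) ≤ (1 + K) * (1 + |k|) := by nlinarith [abs_nonneg k]
        calc |k - k0| ^ (j - m) ≤ ((1 + K) * (1 + |k|)) ^ (j - m) :=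
              pow_le_pow_left₀ (abs_nonneg _) h1 _
          _ ≤ ((1 + K) * (1 + |k|)) ^ (4 * N + 3) :=
              pow_le_pow_right₀ hbase1 (by omega)
          _ = (1 + K) ^ (4 * N + 3) * (1 + |k|) ^ (4 * N + 3) := mul_pow _ _ _
      have heq1 : ‖iteratedDeriv j (rho (fun x : ℝ => r x) N) k0‖ / (Nat.factorial j : ℝ)
            * ((j.descFactorial m : ℝ) * |k - k0| ^ (j - m))
          = (‖iteratedDeriv j (rho (fun x : ℝ => r x) N) k0‖ / (Nat.factorial j : ℝ)
              * (j.descFactorial m : ℝ)) * |k - k0| ^ (j - m) := by ring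
      rw [heq1]
      exact mul_le_mul hb2 hb3 (by positivity) hB0
    calc ∑ j ∈ Finset.range (4 * N + 4),
          ‖(iteratedDeriv j (rho (fun x : ℝ => r x) N) k0 / (Nat.factorial j : ℂ)) *
            ((j.descFactorial m : ℂ) * ((k : ℂ) - (k0 : ℂ)) ^ (j - m))‖
        ≤ ∑ _j ∈ Finset.range (4 * N + 4),
            B * ((1 + K) ^ (4 * N + 3) * (1 + |k|) ^ (4 * N + 3)) :=
          Finset.sum_le_sum hterm
      _ = ((4 * N + 4 : ℝ)) * (B * ((1 + K) ^ (4 * N + 3) * (1 + |k|) ^ (4 * N + 3))) := by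
          rw [Finset.sum_const, Finset.card_range]
          ring
  -- Schwartz decay of r
  set cr : ℝ := 2 ^ 4 *
    ((Finset.Iic ((4, N + 1) : ℕ × ℕ)).sup
      (fun mm => SchwartzMap.seminorm ℝ mm.1 mm.2)) r with hcrdef
  have hcr0 : 0 ≤ cr := by
    rw [hcrdef]
    have := apply_nonneg ((Finset.Iic ((4, N + 1) : ℕ × ℕ)).sup
      (fun mm => SchwartzMap.seminorm ℝ (E := ℝ) (F := ℂ) mm.1 mm.2)) r
    positivity
  have hr4 : ∀ n, n ≤ N + 1 → ∀ k : ℝ,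
      ‖iteratedDeriv n (fun x : ℝ => r x) k‖ * (1 + |k|) ^ 4 ≤ cr := by
    intro n hn k
    have h := SchwartzMap.one_add_le_sup_seminorm_apply (𝕜 := ℝ)
      (m := ((4, N + 1) : ℕ × ℕ)) (k := 4) (n := n) le_rfl hn r k
    rw [norm_iteratedFDeriv_eq_norm_iteratedDeriv] at h
    rw [hcrdef]
    calc ‖iteratedDeriv n (fun x : ℝ => r x) k‖ * (1 + |k|) ^ 4
        = (1 + ‖k‖) ^ 4 * ‖iteratedDeriv n (⇑r) k‖ := by
          rw [Real.norm_eq_abs]; ring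
      _ ≤ _ := h
  -- the constants
  set C1 : ℝ := 2 ^ (N + 1) * (B * (cw * 2 ^ (4 * N + 7))) with hC1def
  set C2 : ℝ := cr + 2 ^ (N + 1) *
    ((4 * N + 4 : ℝ) * (B * (1 + K) ^ (4 * N + 3)) * (cw * 2 ^ (4 * N + 7))) with hC2def
  have hC10 : 0 ≤ C1 := by
    rw [hC1def]; positivity
  have hC20 : 0 ≤ C2 := by
    rw [hC2def]
    have h1 : (0 : ℝ) ≤ 2 ^ (N + 1) *
        ((4 * N + 4 : ℝ) * (B * (1 + K) ^ (4 * N + 3)) * (cw * 2 ^ (4 * N + 7))) := by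
      positivity
    linarith
  refine ⟨C1 + C2 + 1, by linarith, ?_⟩
  intro k0 hk0 n hn k
  have hpk : (0 : ℝ) < 1 + |k| := by positivity
  constructor
  · -- near bound
    intro hk
    rw [fTay_eq_mul]
    refine le_trans (leibniz_norm
      (f := fun x : ℝ => rho (fun x' : ℝ => r x') N x
        - ∑ j ∈ Finset.range (4 * N + 4),
            iteratedDeriv j (rho (fun x' : ℝ => r x') N) k0 * ((x : ℂ) - (k0 : ℂ)) ^ j
              / (Nat.factorial j))
      (g := fun x : ℝ => ((x : ℂ) - Complex.I) ^ (-((4 * N + 7 : ℕ) : ℤ)))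
      (hρ.sub (contDiff_Spoly (rho (fun x : ℝ => r x) N) (4 * N + 4) k0)) hw n k) ?_
    have hstep : ∀ j ∈ Finset.range (n + 1),
        (n.choose j : ℝ) * ‖iteratedDeriv j (fun x : ℝ => rho (fun x' : ℝ => r x') N x
            - ∑ j' ∈ Finset.range (4 * N + 4),
              iteratedDeriv j' (rho (fun x' : ℝ => r x') N) k0 * ((x : ℂ) - (k0 : ℂ)) ^ j'
                / (Nat.factorial j')) k‖
          * ‖iteratedDeriv (n - j)
              (fun x : ℝ => ((x : ℂ) - Complex.I) ^ (-((4 * N + 7 : ℕ) : ℤ))) k‖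
          ≤ (n.choose j : ℝ) * ((B * |k - k0| ^ (4 * N + 4 - n)) * (cw * 2 ^ (4 * N + 7))) := by
      intro j hj
      have hjn : j ≤ n := by
        have := Finset.mem_range.mp hj; omega
      have e1 : ‖iteratedDeriv j (fun x : ℝ => rho (fun x' : ℝ => r x') N x
          - ∑ j' ∈ Finset.range (4 * N + 4),
            iteratedDeriv j' (rho (fun x' : ℝ => r x') N) k0 * ((x : ℂ) - (k0 : ℂ)) ^ j'
              / (Nat.factorial j')) k‖ ≤ B * |k - k0| ^ (4 * N + 4 - n) := by
        refine (hgbound k0 hk0 j (by omega) k hk).trans ?_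
        apply mul_le_mul_of_nonneg_left _ hB0
        exact pow_le_pow_of_le_one (abs_nonneg _) hk (by omega)
      have e2 : ‖iteratedDeriv (n - j)
          (fun x : ℝ => ((x : ℂ) - Complex.I) ^ (-((4 * N + 7 : ℕ) : ℤ))) k‖
          ≤ cw * 2 ^ (4 * N + 7) := by
        refine (hwb (n - j) (by omega) k).trans ?_
        rw [hcwdef]
        apply mul_le_mul_of_nonneg_left _ (by positivity)
        apply div_le_self (by positivity)
        apply one_le_pow₀
        linarith [abs_nonneg k]
      calc (n.choose j : ℝ) * ‖iteratedDeriv j _ k‖ * ‖iteratedDeriv (n - j) _ k‖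
          ≤ (n.choose j : ℝ) * (B * |k - k0| ^ (4 * N + 4 - n)) * (cw * 2 ^ (4 * N + 7)) := by
            apply mul_le_mul _ e2 (norm_nonneg _) _
            · exact mul_le_mul_of_nonneg_left e1 (Nat.cast_nonneg _)
            · apply mul_nonneg (Nat.cast_nonneg _)
              exact mul_nonneg hB0 (by positivity)
        _ = (n.choose j : ℝ) * ((B * |k - k0| ^ (4 * N + 4 - n)) * (cw * 2 ^ (4 * N + 7))) := by
            ring
    refine (Finset.sum_le_sum hstep).trans ?_
    rw [← Finset.sum_mul]
    have hch : (∑ j ∈ Finset.range (n + 1), (n.choose j : ℝ)) = 2 ^ n := by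
      exact_mod_cast Nat.sum_range_choose n
    rw [hch]
    calc (2 : ℝ) ^ n * ((B * |k - k0| ^ (4 * N + 4 - n)) * (cw * 2 ^ (4 * N + 7)))
        ≤ 2 ^ (N + 1) * ((B * |k - k0| ^ (4 * N + 4 - n)) * (cw * 2 ^ (4 * N + 7))) := by
          apply mul_le_mul_of_nonneg_right (pow_le_pow_right₀ one_le_two hn)
          exact mul_nonneg (mul_nonneg hB0 (by positivity)) (by positivity)
      _ = C1 * |k - k0| ^ (4 * N + 4 - n) := by
          rw [hC1def]; ring
      _ ≤ (C1 + C2 + 1) * |k - k0| ^ (4 * N + 4 - n) := by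
          apply mul_le_mul_of_nonneg_right _ (by positivity)
          linarith
  · -- far bound
    have e0 : iteratedDeriv n (fTay (fun x : ℝ => r x) N k0) k
        = iteratedDeriv n (fun x : ℝ => r x) k
          - iteratedDeriv n (fun x : ℝ => (∑ j ∈ Finset.range (4 * N + 4),
              iteratedDeriv j (rho (fun x' : ℝ => r x') N) k0 * ((x : ℂ) - (k0 : ℂ)) ^ j
                / (Nat.factorial j))
              * ((x : ℂ) - Complex.I) ^ (-((4 * N + 7 : ℕ) : ℤ))) k := by
      rw [fTay_eq_sub]
      exact my_iteratedDeriv_sub r.smooth'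
        ((contDiff_Spoly (rho (fun x : ℝ => r x) N) (4 * N + 4) k0).mul hw) n k
    rw [e0]
    have t1 : ‖iteratedDeriv n (fun x : ℝ => r x) k‖ ≤ cr / (1 + |k|) ^ 4 := by
      rw [le_div_iff₀ (by positivity)]
      exact hr4 n hn k
    have t2 : ‖iteratedDeriv n (fun x : ℝ => (∑ j ∈ Finset.range (4 * N + 4),
          iteratedDeriv j (rho (fun x' : ℝ => r x') N) k0 * ((x : ℂ) - (k0 : ℂ)) ^ j
            / (Nat.factorial j))
          * ((x : ℂ) - Complex.I) ^ (-((4 * N + 7 : ℕ) : ℤ))) k‖ * (1 + |k|) ^ 4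
        ≤ 2 ^ (N + 1) *
          ((4 * N + 4 : ℝ) * (B * (1 + K) ^ (4 * N + 3)) * (cw * 2 ^ (4 * N + 7))) := by
      have lb := leibniz_norm
        (f := fun x : ℝ => ∑ j ∈ Finset.range (4 * N + 4),
          iteratedDeriv j (rho (fun x' : ℝ => r x') N) k0 * ((x : ℂ) - (k0 : ℂ)) ^ j
            / (Nat.factorial j))
        (g := fun x : ℝ => ((x : ℂ) - Complex.I) ^ (-((4 * N + 7 : ℕ) : ℤ)))
        (contDiff_Spoly (rho (fun x : ℝ => r x) N) (4 * N + 4) k0) hw n k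
      have hstep2 : ∀ j ∈ Finset.range (n + 1),
          ((n.choose j : ℝ) * ‖iteratedDeriv j (fun x : ℝ => ∑ j' ∈ Finset.range (4 * N + 4),
              iteratedDeriv j' (rho (fun x' : ℝ => r x') N) k0 * ((x : ℂ) - (k0 : ℂ)) ^ j'
                / (Nat.factorial j')) k‖
            * ‖iteratedDeriv (n - j)
                (fun x : ℝ => ((x : ℂ) - Complex.I) ^ (-((4 * N + 7 : ℕ) : ℤ))) k‖)
            * (1 + |k|) ^ 4
          ≤ (n.choose j : ℝ) *
            ((4 * N + 4 : ℝ) * (B * (1 + K) ^ (4 * N + 3)) * (cw * 2 ^ (4 * N + 7))) := by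
        intro j hj
        have hjn : j ≤ n := by
          have := Finset.mem_range.mp hj; omega
        have e1 := hSb k0 hk0 j (by omega) k
        have e2 := hwb (n - j) (by omega) k
        calc ((n.choose j : ℝ) * ‖iteratedDeriv j _ k‖ * ‖iteratedDeriv (n - j) _ k‖)
              * (1 + |k|) ^ 4
            ≤ ((n.choose j : ℝ) *
                (((4 * N + 4 : ℝ)) * (B * ((1 + K) ^ (4 * N + 3) * (1 + |k|) ^ (4 * N + 3))))
                * (cw * (2 ^ (4 * N + 7) / (1 + |k|) ^ (4 * N + 7)))) * (1 + |k|) ^ 4 := by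
              apply mul_le_mul_of_nonneg_right _ (by positivity)
              apply mul_le_mul _ e2 (norm_nonneg _) _
              · exact mul_le_mul_of_nonneg_left e1 (Nat.cast_nonneg _)
              · apply mul_nonneg (Nat.cast_nonneg _)
                apply mul_nonneg (by positivity)
                exact mul_nonneg hB0 (by positivity)
          _ = (n.choose j : ℝ) *
                ((4 * N + 4 : ℝ) * (B * (1 + K) ^ (4 * N + 3)) * (cw * 2 ^ (4 * N + 7))) := by
              rw [show 4 * N + 7 = (4 * N + 3) + 4 by omega, pow_add (1 + |k|)]
              field_simp
              ring
      calc ‖iteratedDeriv n _ k‖ * (1 + |k|) ^ 4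
          ≤ (∑ j ∈ Finset.range (n + 1), (n.choose j : ℝ)
              * ‖iteratedDeriv j (fun x : ℝ => ∑ j' ∈ Finset.range (4 * N + 4),
                  iteratedDeriv j' (rho (fun x' : ℝ => r x') N) k0 * ((x : ℂ) - (k0 : ℂ)) ^ j'
                    / (Nat.factorial j')) k‖
              * ‖iteratedDeriv (n - j)
                  (fun x : ℝ => ((x : ℂ) - Complex.I) ^ (-((4 * N + 7 : ℕ) : ℤ))) k‖)
            * (1 + |k|) ^ 4 := by
            apply mul_le_mul_of_nonneg_right lb (by positivity)
        _ = ∑ j ∈ Finset.range (n + 1), ((n.choose j : ℝ)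
              * ‖iteratedDeriv j (fun x : ℝ => ∑ j' ∈ Finset.range (4 * N + 4),
                  iteratedDeriv j' (rho (fun x' : ℝ => r x') N) k0 * ((x : ℂ) - (k0 : ℂ)) ^ j'
                    / (Nat.factorial j')) k‖
              * ‖iteratedDeriv (n - j)
                  (fun x : ℝ => ((x : ℂ) - Complex.I) ^ (-((4 * N + 7 : ℕ) : ℤ))) k‖)
              * (1 + |k|) ^ 4 := Finset.sum_mul _ _ _
        _ ≤ ∑ j ∈ Finset.range (n + 1), (n.choose j : ℝ) *
              ((4 * N + 4 : ℝ) * (B * (1 + K) ^ (4 * N + 3)) * (cw * 2 ^ (4 * N + 7))) :=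
            Finset.sum_le_sum hstep2
        _ = (∑ j ∈ Finset.range (n + 1), (n.choose j : ℝ)) *
              ((4 * N + 4 : ℝ) * (B * (1 + K) ^ (4 * N + 3)) * (cw * 2 ^ (4 * N + 7))) :=
            (Finset.sum_mul _ _ _).symm
        _ ≤ 2 ^ (N + 1) *
              ((4 * N + 4 : ℝ) * (B * (1 + K) ^ (4 * N + 3)) * (cw * 2 ^ (4 * N + 7))) := by
            have hch : (∑ j ∈ Finset.range (n + 1), (n.choose j : ℝ)) = 2 ^ n := by
              exact_mod_cast Nat.sum_range_choose n
            rw [hch]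
            apply mul_le_mul_of_nonneg_right (pow_le_pow_right₀ one_le_two hn)
            apply mul_nonneg (mul_nonneg (by positivity) _) (by positivity)
            exact mul_nonneg hB0 (by positivity)
    have t2' : ‖iteratedDeriv n (fun x : ℝ => (∑ j ∈ Finset.range (4 * N + 4),
          iteratedDeriv j (rho (fun x' : ℝ => r x') N) k0 * ((x : ℂ) - (k0 : ℂ)) ^ j
            / (Nat.factorial j))
          * ((x : ℂ) - Complex.I) ^ (-((4 * N + 7 : ℕ) : ℤ))) k‖
        ≤ (2 ^ (N + 1) *
          ((4 * N + 4 : ℝ) * (B * (1 + K) ^ (4 * N + 3)) * (cw * 2 ^ (4 * N + 7))))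
            / (1 + |k|) ^ 4 := by
      rw [le_div_iff₀ (by positivity)]
      exact t2
    calc ‖iteratedDeriv n (fun x : ℝ => r x) k
          - iteratedDeriv n (fun x : ℝ => (∑ j ∈ Finset.range (4 * N + 4),
              iteratedDeriv j (rho (fun x' : ℝ => r x') N) k0 * ((x : ℂ) - (k0 : ℂ)) ^ j
                / (Nat.factorial j))
              * ((x : ℂ) - Complex.I) ^ (-((4 * N + 7 : ℕ) : ℤ))) k‖
        ≤ ‖iteratedDeriv n (fun x : ℝ => r x) k‖
          + ‖iteratedDeriv n (fun x : ℝ => (∑ j ∈ Finset.range (4 * N + 4),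
              iteratedDeriv j (rho (fun x' : ℝ => r x') N) k0 * ((x : ℂ) - (k0 : ℂ)) ^ j
                / (Nat.factorial j))
              * ((x : ℂ) - Complex.I) ^ (-((4 * N + 7 : ℕ) : ℤ))) k‖ := norm_sub_le _ _
      _ ≤ cr / (1 + |k|) ^ 4 + (2 ^ (N + 1) *
            ((4 * N + 4 : ℝ) * (B * (1 + K) ^ (4 * N + 3)) * (cw * 2 ^ (4 * N + 7))))
              / (1 + |k|) ^ 4 := add_le_add t1 t2'
      _ = C2 / (1 + |k|) ^ 4 := by
          rw [hC2def, add_div]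
      _ ≤ (C1 + C2 + 1) / (1 + |k|) ^ 4 := by
          apply div_le_div_of_nonneg_right _ (by positivity)
          linarith
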